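/- Let μ be a probabilistic frame for ℝ^d. Every transport dual ν ∈ D_μ is itself a probabilistic frame; i.e., if ν ∈ P₂(ℝ^d) and there exists a coupling γ ∈ Γ(μ,ν) with ∬ x y^T dγ(x,y) = I, then the support of ν spans ℝ^d. -/

import Mathlib

open MeasureTheory
open scoped RealInnerProductSpace

/-- The support of a measure: points all of whose open neighborhoods have positive measure. -/
def measureSupport {E : Type*} [TopologicalSpace E] [MeasurableSpace E]
    (μ : MeasureTheory.Measure E) : Set E :=
  {x | ∀ U : Set E, IsOpen U → x ∈ U → 0 < μ U}

/-- In a second-countable space, the complement of the support is null. -/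
lemma measure_compl_measureSupport {E : Type*} [TopologicalSpace E]
    [SecondCountableTopology E] [MeasurableSpace E]
    (ν : MeasureTheory.Measure E) : ν (measureSupport ν)ᶜ = 0 := by
  apply measure_null_of_locally_null
  intro x hx
  simp only [measureSupport, Set.mem_compl_iff, Set.mem_setOf_eq, not_forall] at hx
  obtain ⟨U, hU, hxU, hUν⟩ := hx
  refine ⟨U, ?_, by simpa using hUν⟩
  exact mem_nhdsWithin_of_mem_nhds (hU.mem_nhds hxU)

lemma abs_coord_le_norm {d : ℕ} (x : EuclideanSpace ℝ (Fin d)) (i : Fin d) :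
    |x i| ≤ ‖x‖ := by
  have h : x i = ⟪EuclideanSpace.single i (1 : ℝ), x⟫ := by
    rw [EuclideanSpace.inner_single_left]; simp
  rw [h]
  calc |⟪EuclideanSpace.single i (1 : ℝ), x⟫| ≤ ‖EuclideanSpace.single i (1 : ℝ)‖ * ‖x‖ :=
        abs_real_inner_le_norm _ _
    _ = ‖x‖ := by rw [EuclideanSpace.norm_single]; simp

/-- Every transport dual of a probabilistic frame is itself a probabilistic frame: if
`ν ∈ P₂(ℝ^d)` admits a coupling `γ` with `μ` satisfying `∬ x yᵀ dγ = I`, then the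
support of `ν` spans `ℝ^d`. -/
theorem stmt5 {d : ℕ} (μ ν : Measure (EuclideanSpace ℝ (Fin d)))
    [IsProbabilityMeasure μ] [IsProbabilityMeasure ν]
    (hμ2 : Integrable (fun x : EuclideanSpace ℝ (Fin d) => ‖x‖ ^ 2) μ)
    (hν2 : Integrable (fun x : EuclideanSpace ℝ (Fin d) => ‖x‖ ^ 2) ν)
    (hμspan : Submodule.span ℝ (measureSupport μ) = ⊤)
    (γ : Measure (EuclideanSpace ℝ (Fin d) × EuclideanSpace ℝ (Fin d)))
    (hγ1 : γ.map Prod.fst = μ) (hγ2 : γ.map Prod.snd = ν)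
    (hdual : ∀ i j : Fin d, (∫ p : EuclideanSpace ℝ (Fin d) × EuclideanSpace ℝ (Fin d),
      p.1 i * p.2 j ∂γ) = (1 : Matrix (Fin d) (Fin d) ℝ) i j) :
    Submodule.span ℝ (measureSupport ν) = ⊤ := by
  by_contra hspan
  -- Find a nonzero vector orthogonal to the span of the support of ν.
  set K : Submodule ℝ (EuclideanSpace ℝ (Fin d)) := Submodule.span ℝ (measureSupport ν) with hK
  have hKbot : Kᗮ ≠ ⊥ := by
    intro h
    exact hspan (Submodule.orthogonal_eq_bot_iff.mp h)
  obtain ⟨v, hvK, hvne⟩ := Submodule.ne_bot_iff _ |>.mp hKbot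
  -- For points in the support, the inner product with v vanishes.
  have hv0 : ∀ y ∈ measureSupport ν, ⟪v, y⟫ = 0 := by
    intro y hy
    have : y ∈ K := Submodule.subset_span hy
    have := (Submodule.mem_orthogonal K v).mp hvK y this
    rwa [real_inner_comm] at this
  -- ν-a.e. point is in the support.
  have hae : ∀ᵐ y ∂ν, y ∈ measureSupport ν := by
    rw [ae_iff]
    convert measure_compl_measureSupport ν using 2
    rfl
  -- Transfer to γ through the second marginal.
  have haeγ : ∀ᵐ p ∂γ, ⟪v, p.2⟫ = 0 := by
    have h2 : ∀ᵐ y ∂(γ.map Prod.snd), ⟪v, y⟫ = 0 := by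
      rw [hγ2]
      filter_upwards [hae] with y hy using hv0 y hy
    exact ae_of_ae_map measurable_snd.aemeasurable h2
  -- Integrability of second moments under γ.
  have hfst : Integrable (fun p : EuclideanSpace ℝ (Fin d) × EuclideanSpace ℝ (Fin d) =>
      ‖p.1‖ ^ 2) γ := by
    have : Integrable (fun x : EuclideanSpace ℝ (Fin d) => ‖x‖ ^ 2) (γ.map Prod.fst) := by
      rw [hγ1]; exact hμ2
    exact (integrable_map_measure this.aestronglyMeasurable measurable_fst.aemeasurable).mp this
  have hsnd : Integrable (fun p : EuclideanSpace ℝ (Fin d) × EuclideanSpace ℝ (Fin d) =>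
      ‖p.2‖ ^ 2) γ := by
    have : Integrable (fun x : EuclideanSpace ℝ (Fin d) => ‖x‖ ^ 2) (γ.map Prod.snd) := by
      rw [hγ2]; exact hν2
    exact (integrable_map_measure this.aestronglyMeasurable measurable_snd.aemeasurable).mp this
  -- Each coordinate product is integrable.
  have hint : ∀ i j : Fin d, Integrable
      (fun p : EuclideanSpace ℝ (Fin d) × EuclideanSpace ℝ (Fin d) => p.1 i * p.2 j) γ := by
    intro i j
    refine Integrable.mono' (hfst.add hsnd) ?_ ?_
    · apply Continuous.aestronglyMeasurable
      have h1 : Continuous fun p : EuclideanSpace ℝ (Fin d) × EuclideanSpace ℝ (Fin d) =>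
          p.1 i := (EuclideanSpace.proj i).continuous.comp continuous_fst
      have h2 : Continuous fun p : EuclideanSpace ℝ (Fin d) × EuclideanSpace ℝ (Fin d) =>
          p.2 j := (EuclideanSpace.proj j).continuous.comp continuous_snd
      exact h1.mul h2
    · filter_upwards with p
      have h1 := abs_coord_le_norm p.1 i
      have h2 := abs_coord_le_norm p.2 j
      have hn1 : (0:ℝ) ≤ ‖p.1‖ := norm_nonneg _
      have hn2 : (0:ℝ) ≤ ‖p.2‖ := norm_nonneg _
      have : ‖p.1 i * p.2 j‖ = |p.1 i| * |p.2 j| := by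
        rw [norm_mul]; rfl
    -- bound |a||b| ≤ ‖p.1‖‖p.2‖ ≤ ‖p.1‖² + ‖p.2‖²
      rw [this]
      simp only [Pi.add_apply]
      nlinarith [mul_le_mul h1 h2 (abs_nonneg (p.2 j)) hn1, sq_nonneg (‖p.1‖ - ‖p.2‖), abs_nonneg (p.1 i), abs_nonneg (p.2 j)]
  -- Compute the integral of ⟪v, p.1⟫ * ⟪v, p.2⟫ two ways.
  have hexp : (fun p : EuclideanSpace ℝ (Fin d) × EuclideanSpace ℝ (Fin d) =>
      ⟪v, p.1⟫ * ⟪v, p.2⟫) =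
      fun p => ∑ i : Fin d, ∑ j : Fin d, (v i * v j) * (p.1 i * p.2 j) := by
    funext p
    rw [PiLp.inner_apply, PiLp.inner_apply]
    simp only [RCLike.inner_apply, conj_trivial]
    rw [Finset.sum_mul_sum]
    apply Finset.sum_congr rfl; intro i _
    apply Finset.sum_congr rfl; intro j _
    ring
  have hI1 : (∫ p, ⟪v, p.1⟫ * ⟪v, p.2⟫ ∂γ) = ∑ i : Fin d, (v i)^2 := by
    rw [hexp]
    rw [integral_finset_sum _ (fun i _ => integrable_finset_sum _
      (fun j _ => ((hint i j).const_mul _)))]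
    have : ∀ i : Fin d, (∫ p, ∑ j : Fin d, (v i * v j) * (p.1 i * p.2 j) ∂γ)
        = (v i)^2 := by
      intro i
      rw [integral_finset_sum _ (fun j _ => ((hint i j).const_mul _))]
      have : ∀ j : Fin d, (∫ p, (v i * v j) * (p.1 i * p.2 j) ∂γ)
          = (v i * v j) * ((1 : Matrix (Fin d) (Fin d) ℝ) i j) := by
        intro j
        rw [integral_const_mul, hdual i j]
      rw [Finset.sum_congr rfl (fun j _ => this j)]
      simp [Matrix.one_apply, sq]
    rw [Finset.sum_congr rfl (fun i _ => this i)]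
  have hI0 : (∫ p, ⟪v, p.1⟫ * ⟪v, p.2⟫ ∂γ) = 0 := by
    have : (fun p : EuclideanSpace ℝ (Fin d) × EuclideanSpace ℝ (Fin d) =>
        ⟪v, p.1⟫ * ⟪v, p.2⟫) =ᵐ[γ] 0 := by
      filter_upwards [haeγ] with p hp
      simp [hp]
    rw [integral_congr_ae this]; simp
  -- Contradiction: the sum of squares of a nonzero vector is positive.
  rw [hI0] at hI1
  apply hvne
  have hz : ∀ i : Fin d, (v i)^2 = 0 := by
    intro i
    have hnn : ∀ i ∈ Finset.univ, (0:ℝ) ≤ (v i)^2 := fun i _ => sq_nonneg _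
    exact (Finset.sum_eq_zero_iff_of_nonneg hnn).mp hI1.symm i (Finset.mem_univ i)
  ext i
  have := hz i
  simpa [sq_eq_zero_iff] using this
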